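/- Let φ(t) = θ₁(t)/(1 - θ₂(t)) where θ solves the linear DEQ gradient flow with data covariance Σ ≻ 0. Then φ'(t) = -(2/(1-θ₂(t))²)·(I_d + φ(t)φ(t)ᵀ)·Σ·(φ(t) - ξ). -/

import Mathlib

open Matrix

/-- Let `φ(t) = θ₁(t)/(1-θ₂(t))` along the linear DEQ gradient flow with
`Σ ≻ 0`. Then `φ'(t) = -(2/(1-θ₂(t))²) (I_d + φ(t)φ(t)ᵀ) Σ (φ(t) - ξ)`, i.e.
`φ' = -(2/(1-θ₂)²) • (Σ(φ-ξ) + (φᵀΣ(φ-ξ)) φ)`. -/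
theorem phi_derivative_formula {d : ℕ}
    (Sig : Matrix (Fin d) (Fin d) ℝ) (hSym : Sig.IsSymm) (hPD : Sig.PosDef)
    (ξ : Fin d → ℝ)
    (I : Set ℝ) (hI : Convex ℝ I)
    (θ₁ : ℝ → Fin d → ℝ) (θ₂ : ℝ → ℝ)
    (hne : ∀ t ∈ I, θ₂ t ≠ 1)
    (hθ₁ : ∀ t ∈ I, HasDerivWithinAt θ₁
      ((-2 : ℝ) • Sig.mulVec ((1 / (1 - θ₂ t) ^ 2) • θ₁ t - (1 / (1 - θ₂ t)) • ξ)) I t)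
    (hθ₂ : ∀ t ∈ I, HasDerivWithinAt θ₂
      (-2 * (((1 / (1 - θ₂ t) ^ 2) • θ₁ t) ⬝ᵥ Sig.mulVec ((1 / (1 - θ₂ t)) • θ₁ t - ξ))) I t) :
    ∀ t ∈ I, HasDerivWithinAt (fun s => (1 / (1 - θ₂ s)) • θ₁ s)
      ((-2 / (1 - θ₂ t) ^ 2) •
        (Sig.mulVec ((1 / (1 - θ₂ t)) • θ₁ t - ξ) +
          (((1 / (1 - θ₂ t)) • θ₁ t) ⬝ᵥ Sig.mulVec ((1 / (1 - θ₂ t)) • θ₁ t - ξ)) •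
            ((1 / (1 - θ₂ t)) • θ₁ t))) I t := by
  intro t ht
  have hc : (1 : ℝ) - θ₂ t ≠ 0 := sub_ne_zero.2 (Ne.symm (hne t ht))
  have hinv : HasDerivWithinAt (fun s => (1 - θ₂ s)⁻¹)
      (-(0 - (-2 * (((1 / (1 - θ₂ t) ^ 2) • θ₁ t) ⬝ᵥ Sig.mulVec ((1 / (1 - θ₂ t)) • θ₁ t - ξ)))) / (1 - θ₂ t) ^ 2) I t :=
    (((hasDerivWithinAt_const t I (1:ℝ)).sub (hθ₂ t ht)).inv hc)
  have h := hinv.smul (hθ₁ t ht)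
  simp only [one_div]
  convert h using 1
  case e'_4 => rfl
  case e'_5 => rfl
  case e'_6 => rfl
  case e'_8 => rfl
  have e1 : (1 / (1 - θ₂ t) ^ 2) • θ₁ t
      = (1 / (1 - θ₂ t)) • ((1 / (1 - θ₂ t)) • θ₁ t) := by
    rw [smul_smul, div_mul_div_comm, one_mul, sq]
  rw [e1, ← smul_sub, Matrix.mulVec_smul, smul_dotProduct]
  simp only [one_div]
  match_scalars <;> field_simp <;> ring_nf <;> simp only [smul_dotProduct, smul_eq_mul] <;> field_simp <;> ring
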